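/- Let X = {a, b} be a two-point set with the discrete metric (d(x,y) = 1 for x ≠ y, d(x,x) = 0), and let f : X → X be the swap map f(a) = b, f(b) = a. Then (X, f) has the shadowing property, but the induced system (𝓜(X), f̂) on the space of Borel probability measures with the Lévy–Prokhorov metric does not have the shadowing property. -/

import Mathlib

open MeasureTheory Filter

/-- `nacomp f n = f_{n-1} ∘ ⋯ ∘ f_0` (with `nacomp f 0 = id`): the time-`n` map of the
non-autonomous system `(X, f_{0,∞})`. -/
def nacomp {Y : Type*} (f : ℕ → Y → Y) : ℕ → Y → Y
  | 0 => id
  | n + 1 => f n ∘ nacomp f n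

/-- The induced pushforward map `f̂` on the space `𝓜(X)` of Borel probability measures,
equipped with the Lévy–Prokhorov metric. -/
noncomputable def inducedMap {X : Type*} [MetricSpace X] [MeasurableSpace X] [BorelSpace X]
    (f : X → X) (hf : Continuous f) :
    LevyProkhorov (ProbabilityMeasure X) → LevyProkhorov (ProbabilityMeasure X) :=
  fun μ => (LevyProkhorov.toMeasureEquiv (α := ProbabilityMeasure X)).symm
    (((LevyProkhorov.toMeasureEquiv (α := ProbabilityMeasure X)) μ).map hf.measurable.aemeasurable)

/-- The shadowing property of the autonomous system `(Y, g)`. -/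
def ShadowingMap {Y : Type*} [PseudoMetricSpace Y] (g : Y → Y) : Prop :=
  ∀ ε : ℝ, 0 < ε → ∃ δ : ℝ, 0 < δ ∧ ∀ x : ℕ → Y,
    (∀ n, dist (g (x n)) (x (n + 1)) < δ) →
    ∃ z : Y, ∀ n, dist (g^[n] z) (x n) < ε

open Metric
open scoped ENNReal

section Aux
variable {X : Type*} [MetricSpace X] [MeasurableSpace X] [BorelSpace X]

/-- the measure t·δ_a + (1−t)·δ_b -/
noncomputable def twoPtM (a b : X) (t : ℝ) : Measure X :=
  (ENNReal.ofReal t) • Measure.dirac a + (ENNReal.ofReal (1-t)) • Measure.dirac b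

lemma twoPtM_isProb (a b : X) (t : ℝ) (h0 : 0 ≤ t) (h1 : t ≤ 1) :
    IsProbabilityMeasure (twoPtM a b t) := by
  constructor
  simp [twoPtM, ← ENNReal.ofReal_add h0 (by linarith : (0:ℝ) ≤ 1 - t)]

lemma twoPtM_apply_a (a b : X) (hab : a ≠ b) (t : ℝ) :
    twoPtM a b t {a} = ENNReal.ofReal t := by
  simp [twoPtM, Measure.dirac_apply' _ (measurableSet_singleton a), hab.symm]

noncomputable def twoPtP (a b : X) (t : ℝ) (h0 : 0 ≤ t) (h1 : t ≤ 1) :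
    ProbabilityMeasure X := ⟨twoPtM a b t, twoPtM_isProb a b t h0 h1⟩

/-- value of a probability measure at {a}, as a real number -/
noncomputable def phiA (a : X) (P : ProbabilityMeasure X) : ℝ := (P.toMeasure {a}).toReal

lemma phiA_nonneg (a : X) (P : ProbabilityMeasure X) : 0 ≤ phiA a P := ENNReal.toReal_nonneg

lemma phiA_le_one (a : X) (P : ProbabilityMeasure X) : phiA a P ≤ 1 := by
  have := prob_le_one (μ := P.toMeasure) (s := {a})
  simpa [phiA] using ENNReal.toReal_le_of_le_ofReal zero_le_one (by simpa using this)

lemma phiA_twoPtP (a b : X) (hab : a ≠ b) (t : ℝ) (h0 : 0 ≤ t) (h1 : t ≤ 1) :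
    phiA a (twoPtP a b t h0 h1) = t := by
  simp [phiA, twoPtP, twoPtM_apply_a a b hab, ENNReal.toReal_ofReal h0]

lemma meas_a_eq (a : X) (P : ProbabilityMeasure X) :
    P.toMeasure {a} = ENNReal.ofReal (phiA a P) :=
  (ENNReal.ofReal_toReal (measure_ne_top _ _)).symm

lemma meas_b_eq (a b : X) (hab : a ≠ b) (hX : ∀ x : X, x = a ∨ x = b)
    (P : ProbabilityMeasure X) :
    P.toMeasure {b} = ENNReal.ofReal (1 - phiA a P) := by
  have huniv : ({a} : Set X) ∪ {b} = Set.univ := by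
    ext x; rcases hX x with rfl | rfl <;> simp
  have hsum : P.toMeasure {a} + P.toMeasure {b} = 1 := by
    rw [← measure_union (by simpa using hab) (measurableSet_singleton b), huniv,
      measure_univ]
  have : P.toMeasure {b} = 1 - ENNReal.ofReal (phiA a P) := by
    rw [← meas_a_eq]
    exact ENNReal.eq_sub_of_add_eq (measure_ne_top _ _) (by rw [add_comm]; exact hsum)
  rw [this, ← ENNReal.ofReal_one, ← ENNReal.ofReal_sub _ (phiA_nonneg a P)]

lemma set_cases (a b : X) (hab : a ≠ b) (hX : ∀ x : X, x = a ∨ x = b) (B : Set X) :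
    B = ∅ ∨ B = {a} ∨ B = {b} ∨ B = Set.univ := by
  by_cases ha : a ∈ B <;> by_cases hb : b ∈ B
  · right; right; right; ext x; rcases hX x with rfl | rfl <;> simp [ha, hb, hab, hab.symm]
  · right; left; ext x; rcases hX x with rfl | rfl <;> simp [ha, hb, hab, hab.symm]
  · right; right; left; ext x; rcases hX x with rfl | rfl <;> simp [ha, hb, hab, hab.symm]
  · left; ext x; rcases hX x with rfl | rfl <;> simp [ha, hb, hab, hab.symm]


lemma dist_le_abs (a b : X) (hab : a ≠ b) (hX : ∀ x : X, x = a ∨ x = b)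
    (μ ν : LevyProkhorov (ProbabilityMeasure X)) :
    dist μ ν ≤ |phiA a μ.toMeasure - phiA a ν.toMeasure| := by
  rw [LevyProkhorov.dist_probabilityMeasure_def]
  apply levyProkhorovDist_le_of_forall_le _ _ (abs_nonneg _)
  intro ε B hε hB
  have hεpos : 0 < ε := lt_of_le_of_lt (abs_nonneg _) hε
  have hthick : B ⊆ thickening ε B := self_subset_thickening hεpos B
  have hle : ENNReal.ofReal |phiA a μ.toMeasure - phiA a ν.toMeasure| ≤ ENNReal.ofReal ε :=
    ENNReal.ofReal_le_ofReal hε.le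
  have hmain : μ.toMeasure.toMeasure B ≤ ν.toMeasure.toMeasure B +
      ENNReal.ofReal |phiA a μ.toMeasure - phiA a ν.toMeasure| := by
    rcases set_cases a b hab hX B with rfl | rfl | rfl | rfl
    · simp
    · rw [meas_a_eq a, meas_a_eq a, ← ENNReal.ofReal_add (phiA_nonneg a ν.toMeasure) (abs_nonneg _)]
      exact ENNReal.ofReal_le_ofReal (by
        have := le_abs_self (phiA a μ.toMeasure - phiA a ν.toMeasure); linarith)
    · rw [meas_b_eq a b hab hX, meas_b_eq a b hab hX,
        ← ENNReal.ofReal_add (by have := phiA_le_one a ν.toMeasure; linarith) (abs_nonneg _)]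
      exact ENNReal.ofReal_le_ofReal (by
        have := neg_abs_le (phiA a μ.toMeasure - phiA a ν.toMeasure); linarith)
    · simp
  exact hmain.trans (add_le_add (measure_mono hthick) hle)

lemma abs_le_of_dist_lt (a b : X) (hab : a ≠ b) (hdist : dist a b = 1)
    (hX : ∀ x : X, x = a ∨ x = b)
    (μ ν : LevyProkhorov (ProbabilityMeasure X)) (h : dist μ ν < 1/4) :
    |phiA a μ.toMeasure - phiA a ν.toMeasure| ≤ 1/4 := by
  have hne : levyProkhorovEDist μ.toMeasure.toMeasure ν.toMeasure.toMeasure ≠ ∞ :=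
    levyProkhorovEDist_ne_top _ _
  have hlt : levyProkhorovEDist μ.toMeasure.toMeasure ν.toMeasure.toMeasure < ENNReal.ofReal (1/4) := by
    rw [LevyProkhorov.dist_probabilityMeasure_def, levyProkhorovDist] at h
    exact (ENNReal.lt_ofReal_iff_toReal_lt hne).mpr h
  have hthick : thickening (ENNReal.ofReal (1/4)).toReal {a} ⊆ ({a} : Set X) := by
    intro x hx
    rcases hX x with rfl | rfl
    · exact rfl
    · exfalso
      rw [mem_thickening_iff] at hx
      obtain ⟨y, hy, hxy⟩ := hx
      rw [Set.mem_singleton_iff] at hy; subst hy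
      rw [dist_comm, hdist, ENNReal.toReal_ofReal (by norm_num)] at hxy
      norm_num at hxy
  have h1 : μ.toMeasure.toMeasure {a} ≤ ν.toMeasure.toMeasure {a} + ENNReal.ofReal (1/4) :=
    (left_measure_le_of_levyProkhorovEDist_lt hlt (measurableSet_singleton a)).trans
      (add_le_add (measure_mono hthick) le_rfl)
  have h2 : ν.toMeasure.toMeasure {a} ≤ μ.toMeasure.toMeasure {a} + ENNReal.ofReal (1/4) :=
    (right_measure_le_of_levyProkhorovEDist_lt hlt (measurableSet_singleton a)).trans
      (add_le_add (measure_mono hthick) le_rfl)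
  rw [meas_a_eq a μ.toMeasure, meas_a_eq a ν.toMeasure,
    ← ENNReal.ofReal_add (phiA_nonneg a ν.toMeasure) (by norm_num)] at h1
  rw [meas_a_eq a ν.toMeasure, meas_a_eq a μ.toMeasure,
    ← ENNReal.ofReal_add (phiA_nonneg a μ.toMeasure) (by norm_num)] at h2
  rw [ENNReal.ofReal_le_ofReal_iff (by have := phiA_nonneg a ν.toMeasure; linarith)] at h1
  rw [ENNReal.ofReal_le_ofReal_iff (by have := phiA_nonneg a μ.toMeasure; linarith)] at h2
  rw [abs_le]; constructor <;> linarith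

lemma phiA_inducedMap (a b : X) (hab : a ≠ b) (hX : ∀ x : X, x = a ∨ x = b)
    (f : X → X) (hfa : f a = b) (hfb : f b = a) (hf : Continuous f)
    (μ : LevyProkhorov (ProbabilityMeasure X)) :
    phiA a (inducedMap f hf μ).toMeasure = 1 - phiA a μ.toMeasure := by
  have hpre : f ⁻¹' {a} = ({b} : Set X) := by
    ext x
    rcases hX x with rfl | rfl <;>
      simp [hfa, hfb, hab, hab.symm]
  have h0 : phiA a (inducedMap f hf μ).toMeasure
      = ((((μ.toMeasure)).map hf.measurable.aemeasurable).toMeasure {a}).toReal :=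
    rfl
  have h : phiA a (inducedMap f hf μ).toMeasure
      = (((μ.toMeasure)).toMeasure.map f {a}).toReal := by
    rw [h0, ProbabilityMeasure.toMeasure_map]
  rw [h, Measure.map_apply hf.measurable (measurableSet_singleton a), hpre,
    meas_b_eq a b hab hX, ENNReal.toReal_ofReal
      (by have := phiA_le_one a μ.toMeasure; linarith)]


lemma phiA_iterate (a b : X) (hab : a ≠ b) (hX : ∀ x : X, x = a ∨ x = b)
    (f : X → X) (hfa : f a = b) (hfb : f b = a) (hf : Continuous f)
    (z : LevyProkhorov (ProbabilityMeasure X)) (n : ℕ) :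
    phiA a ((inducedMap f hf)^[n] z).toMeasure =
      if Even n then phiA a z.toMeasure else 1 - phiA a z.toMeasure := by
  induction n with
  | zero => simp
  | succ n ih =>
    rw [Function.iterate_succ_apply', phiA_inducedMap a b hab hX f hfa hfb hf, ih]
    rcases Nat.even_or_odd n with h | h
    · simp [h, Nat.even_add_one]
    · have h' : ¬ Even n := Nat.not_even_iff_odd.mpr h
      simp [Nat.even_add_one, h']

end Aux


/-- For the two-point space `X = {a, b}` with the discrete metric and the swap map `f`,
`(X, f)` has the shadowing property but the induced system `(𝓜(X), f̂)` does not. -/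
theorem swap_shadowing_induced_not_shadowing
    {X : Type*} [MetricSpace X] [MeasurableSpace X] [BorelSpace X]
    (a b : X) (hab : a ≠ b) (hdist : dist a b = 1) (hX : ∀ x : X, x = a ∨ x = b)
    (f : X → X) (hfa : f a = b) (hfb : f b = a) (hf : Continuous f) :
    ShadowingMap f ∧ ¬ ShadowingMap (inducedMap f hf) := by
  have hone : ∀ x y : X, x ≠ y → dist x y = 1 := by
    intro x y hxy
    rcases hX x with rfl | rfl <;> rcases hX y with rfl | rfl
    · exact absurd rfl hxy
    · exact hdist
    · rw [dist_comm]; exact hdist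
    · exact absurd rfl hxy
  constructor
  · -- the swap map has shadowing
    intro ε hε
    refine ⟨1, one_pos, fun x hx => ⟨x 0, fun n => ?_⟩⟩
    have horbit : ∀ n, f^[n] (x 0) = x n := by
      intro n
      induction n with
      | zero => simp
      | succ n ih =>
        rw [Function.iterate_succ_apply', ih]
        by_contra hne
        have h1 := hone _ _ hne
        have h2 := hx n
        linarith
    rw [horbit n]
    simpa using hε
  · -- the induced map does not have shadowing
    intro hsh
    obtain ⟨δ, hδ, hsd⟩ := hsh (1/4) (by norm_num)
    set K := ⌈1/δ⌉₊ with hKdef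
    have hKpos : 0 < K := Nat.ceil_pos.mpr (by positivity)
    set N := 2 * K with hNdef
    have hNR : (0:ℝ) < (N:ℝ) := by
      have : 0 < N := by omega
      exact_mod_cast this
    set s := 1 / (2 * (N:ℝ)) with hsdef
    have hspos : 0 < s := by positivity
    have hK1 : 1/δ ≤ (K:ℝ) := Nat.le_ceil _
    have hKδ : 1 ≤ (K:ℝ) * δ := by
      rw [div_le_iff₀ hδ] at hK1; linarith
    have hNcast : (N:ℝ) = 2 * (K:ℝ) := by rw [hNdef]; push_cast; ring
    have hsδ : s < δ := by
      rw [hsdef, hNcast, div_lt_iff₀ (by positivity)]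
      nlinarith
    -- the drift sequence
    set u : ℕ → ℝ := fun n => max (-(1/2)) (min ((n:ℝ) * s) (1 - (n:ℝ) * s)) with hu
    set p : ℕ → ℝ := fun n => 1/2 + (-1:ℝ)^n * u n with hp
    have hu_lb : ∀ n, -(1/2) ≤ u n := fun n => le_max_left _ _
    have hu_ub : ∀ n, u n ≤ 1/2 := by
      intro n
      apply max_le (by norm_num)
      rcases le_total ((n:ℝ) * s) (1/2) with h | h
      · exact (min_le_left _ _).trans h
      · exact (min_le_right _ _).trans (by linarith)
    have habs_u : ∀ n, |(-1:ℝ)^n * u n| ≤ 1/2 := by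
      intro n
      rw [abs_mul, abs_pow, abs_neg, abs_one, one_pow, one_mul]
      exact abs_le.mpr ⟨hu_lb n, hu_ub n⟩
    have hp0 : ∀ n, 0 ≤ p n := by
      intro n; have := abs_le.mp (habs_u n); rw [hp]; dsimp only; linarith [this.1]
    have hp1 : ∀ n, p n ≤ 1 := by
      intro n; have := abs_le.mp (habs_u n); rw [hp]; dsimp only; linarith [this.2]
    have hstep : ∀ n, |u (n+1) - u n| ≤ s := by
      intro n
      have h1 : |((n+1:ℕ):ℝ) * s - (n:ℝ) * s| = s := by
        rw [show ((n+1:ℕ):ℝ) * s - (n:ℝ) * s = s by push_cast; ring]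
        exact abs_of_nonneg hspos.le
      have h2 : |(1 - ((n+1:ℕ):ℝ) * s) - (1 - (n:ℝ) * s)| = s := by
        rw [show (1 - ((n+1:ℕ):ℝ) * s) - (1 - (n:ℝ) * s) = -s by push_cast; ring, abs_neg]
        exact abs_of_nonneg hspos.le
      have h3 := abs_min_sub_min_le_max (((n+1:ℕ):ℝ) * s) (1 - ((n+1:ℕ):ℝ) * s)
        ((n:ℝ) * s) (1 - (n:ℝ) * s)
      rw [h1, h2, max_self] at h3
      have h4 := abs_max_sub_max_le_max (-(1/2:ℝ))
        (min (((n+1:ℕ):ℝ) * s) (1 - ((n+1:ℕ):ℝ) * s)) (-(1/2:ℝ))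
        (min ((n:ℝ) * s) (1 - (n:ℝ) * s))
      rw [sub_self, abs_zero] at h4
      simp only [hu]
      exact h4.trans (max_le hspos.le h3)
    have hNs : (N:ℝ) * s = 1/2 := by
      rw [hsdef]; field_simp
    have h3Ns : ((3*N:ℕ):ℝ) * s = 3/2 := by
      push_cast
      rw [hsdef]; field_simp
    have huN : u N = 1/2 := by
      simp only [hu]; rw [hNs]; norm_num
    have hu3N : u (3*N) = -(1/2) := by
      simp only [hu]; rw [h3Ns]; norm_num
    have hNeven : Even N := ⟨K, by omega⟩
    have h3Neven : Even (3*N) := ⟨3*K, by omega⟩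
    have hpN : p N = 1 := by
      simp only [hp]; rw [hNeven.neg_one_pow, huN]; norm_num
    have hp3N : p (3*N) = 0 := by
      simp only [hp]; rw [h3Neven.neg_one_pow, hu3N]; norm_num
    -- the pseudo-orbit of measures
    set x : ℕ → LevyProkhorov (ProbabilityMeasure X) :=
      fun n => (LevyProkhorov.toMeasureEquiv (α := ProbabilityMeasure X)).symm
        (twoPtP a b (p n) (hp0 n) (hp1 n)) with hxdef
    have hphix : ∀ n, phiA a (x n).toMeasure = p n := by
      intro n
      simp only [hxdef]
      exact phiA_twoPtP a b hab (p n) (hp0 n) (hp1 n)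
    have hpseudo : ∀ n, dist (inducedMap f hf (x n)) (x (n+1)) < δ := by
      intro n
      have h1 := dist_le_abs a b hab hX (inducedMap f hf (x n)) (x (n+1))
      rw [phiA_inducedMap a b hab hX f hfa hfb hf, hphix n, hphix (n+1)] at h1
      have h2 : (1 - p n) - p (n+1) = (-1:ℝ)^n * (u (n+1) - u n) := by
        simp only [hp, pow_succ]; ring
      have h3 : |(1 - p n) - p (n+1)| ≤ s := by
        rw [h2, abs_mul, abs_pow, abs_neg, abs_one, one_pow, one_mul]
        exact hstep n
      calc dist (inducedMap f hf (x n)) (x (n+1)) ≤ |(1 - p n) - p (n+1)| := h1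
        _ ≤ s := h3
        _ < δ := hsδ
    obtain ⟨z, hz⟩ := hsd x hpseudo
    have e1 := abs_le_of_dist_lt a b hab hdist hX _ _ (hz N)
    have e2 := abs_le_of_dist_lt a b hab hdist hX _ _ (hz (3*N))
    rw [phiA_iterate a b hab hX f hfa hfb hf, if_pos hNeven, hphix N, hpN] at e1
    rw [phiA_iterate a b hab hX f hfa hfb hf, if_pos h3Neven, hphix (3*N), hp3N] at e2
    have e1' := abs_le.mp e1
    have e2' := abs_le.mp e2
    linarith [e1'.1, e2'.2]
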